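/- For all integers n ≥ 0 and all b, s ∈ {0,…,n}, the matrix P_{n,b,s} defined by the recursion P_{n,0,s} = (1) and P_{n,b,s} = (s/n)(P ⊗ P_{n−1,b−1,s−1}) + (1 − s/n)(I₂ ⊗ P_{n−1,b−1,s}) satisfies P_{n,b,s} = (T^{⊗b})ᵀ · diag(λ_{n,a_1,s}, …, λ_{n,a_{2^b},s}) · T^{⊗b}, where T = (1/√2)·[[1,1],[−1,1]]. -/

import Mathlib

open Finset Matrix

/-- `λ_{n,b,s} = ∑_{t=0}^{b} C(b,t) (−2)^t (s)_t/(n)_t`. -/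
noncomputable def lam (n b s : ℕ) : ℝ :=
  ∑ t ∈ Finset.range (b + 1),
    (b.choose t : ℝ) * (-2 : ℝ) ^ t * (s.descFactorial t : ℝ) / (n.descFactorial t : ℝ)

/-- The entries of the vector `𝐚_b`, defined by `𝐚_1 = (0,1)` and
`𝐚_b = (𝐚_{b−1}, 𝐚_{b−1} + 𝟏)`; `avec b i` is the `(i+1)`-st entry of `𝐚_b`. -/
def avec : (b : ℕ) → Fin (2 ^ b) → ℕ
  | 0, _ => 0
  | b + 1, i =>
    if h : (i : ℕ) < 2 ^ b then avec b ⟨i, h⟩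
    else avec b ⟨(i : ℕ) - 2 ^ b, by
        have h2 : (i : ℕ) < 2 ^ b * 2 := by rw [← pow_succ]; exact i.isLt
        omega⟩ + 1

/-- Kronecker product of a `2 × 2` matrix with a `k × k` matrix, with indices flattened. -/
noncomputable def kron2 {k : ℕ} (A : Matrix (Fin 2) (Fin 2) ℝ) (B : Matrix (Fin k) (Fin k) ℝ) :
    Matrix (Fin (2 * k)) (Fin (2 * k)) ℝ :=
  Matrix.of fun i j =>
    A ⟨(i : ℕ) / k, by
        rcases Nat.eq_zero_or_pos k with h | h
        · exact absurd i.isLt (by omega)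
        · exact (Nat.div_lt_iff_lt_mul h).mpr (by have := i.isLt; omega)⟩
      ⟨(j : ℕ) / k, by
        rcases Nat.eq_zero_or_pos k with h | h
        · exact absurd j.isLt (by omega)
        · exact (Nat.div_lt_iff_lt_mul h).mpr (by have := j.isLt; omega)⟩
    * B ⟨(i : ℕ) % k, by
        rcases Nat.eq_zero_or_pos k with h | h
        · exact absurd i.isLt (by omega)
        · exact Nat.mod_lt _ h⟩
      ⟨(j : ℕ) % k, by
        rcases Nat.eq_zero_or_pos k with h | h
        · exact absurd j.isLt (by omega)
        · exact Nat.mod_lt _ h⟩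

theorem two_mul_pow (b : ℕ) : 2 * 2 ^ b = 2 ^ (b + 1) := by rw [pow_succ]; ring

/-- `P = [[0,1],[1,0]]`. -/
noncomputable def pM : Matrix (Fin 2) (Fin 2) ℝ := !![0, 1; 1, 0]

/-- `T = (1/√2)·[[1,1],[−1,1]]`. -/
noncomputable def tM : Matrix (Fin 2) (Fin 2) ℝ :=
  (Real.sqrt 2)⁻¹ • !![1, 1; -1, 1]

/-- The matrices `P_{n,b,s}`, defined by the recursion
`P_{n,0,s} = (1)` and
`P_{n,b,s} = (s/n)(P ⊗ P_{n−1,b−1,s−1}) + (1 − s/n)(I₂ ⊗ P_{n−1,b−1,s})`. -/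
noncomputable def Pmat : (b : ℕ) → ℕ → ℕ → Matrix (Fin (2 ^ b)) (Fin (2 ^ b)) ℝ
  | 0, _, _ => 1
  | b + 1, n, s =>
    Matrix.reindex (finCongr (two_mul_pow b)) (finCongr (two_mul_pow b))
      (((s : ℝ) / (n : ℝ)) • kron2 pM (Pmat b (n - 1) (s - 1))
        + (1 - (s : ℝ) / (n : ℝ)) • kron2 (1 : Matrix (Fin 2) (Fin 2) ℝ) (Pmat b (n - 1) s))

/-- The `b`-fold Kronecker power `T^{⊗b}`. -/
noncomputable def Tpow : (b : ℕ) → Matrix (Fin (2 ^ b)) (Fin (2 ^ b)) ℝ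
  | 0 => 1
  | b + 1 =>
    Matrix.reindex (finCongr (two_mul_pow b)) (finCongr (two_mul_pow b)) (kron2 tM (Tpow b))

section Aux

open Kronecker

lemma descFactorial_ne_zero_real {n t : ℕ} (h : t ≤ n) : ((n.descFactorial t : ℝ)) ≠ 0 := by
  have : n.descFactorial t ≠ 0 := fun hc => by
    have := Nat.descFactorial_eq_zero_iff_lt.mp hc; omega
  exact_mod_cast Nat.cast_ne_zero.mpr this

lemma tau_shift (n s t : ℕ) (hn : 1 ≤ n) (ht : t ≤ n - 1) :
    ((s.descFactorial (t+1) : ℝ)) / ((n.descFactorial (t+1) : ℝ))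
      = (s : ℝ) / (n : ℝ) * (((s-1).descFactorial t : ℝ) / (((n-1).descFactorial t : ℝ))) := by
  obtain ⟨m, rfl⟩ : ∃ m, n = m + 1 := ⟨n - 1, by omega⟩
  simp only [Nat.add_sub_cancel] at ht ⊢
  rcases Nat.eq_zero_or_pos s with rfl | hs
  · simp [Nat.descFactorial_succ]
  obtain ⟨r, rfl⟩ : ∃ r, s = r + 1 := ⟨s - 1, by omega⟩
  simp only [Nat.add_sub_cancel]
  rw [Nat.succ_descFactorial_succ, Nat.succ_descFactorial_succ]
  have h1 : ((m.descFactorial t : ℝ)) ≠ 0 := descFactorial_ne_zero_real ht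
  push_cast
  field_simp

lemma tau_rec (n s t : ℕ) (hn : 1 ≤ n) (ht : t ≤ n - 1) (hs : s ≤ n) :
    ((s.descFactorial t : ℝ)) / ((n.descFactorial t : ℝ))
      = (s : ℝ) / (n : ℝ) * (((s-1).descFactorial t : ℝ) / (((n-1).descFactorial t : ℝ)))
        + (1 - (s : ℝ) / (n : ℝ)) * ((s.descFactorial t : ℝ) / (((n-1).descFactorial t : ℝ))) := by
  obtain ⟨m, rfl⟩ : ∃ m, n = m + 1 := ⟨n - 1, by omega⟩
  simp only [Nat.add_sub_cancel] at ht ⊢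
  have h1 : ((m.descFactorial t : ℝ)) ≠ 0 := descFactorial_ne_zero_real ht
  have h2 : (((m+1).descFactorial t : ℝ)) ≠ 0 := descFactorial_ne_zero_real (by omega)
  have hm1 : ((m:ℝ) + 1) ≠ 0 := by positivity
  have key : (m + 1) * m.descFactorial t = (m + 1 - t) * (m+1).descFactorial t := by
    rw [← Nat.succ_descFactorial_succ, Nat.descFactorial_succ]
  rcases Nat.eq_zero_or_pos s with rfl | hspos
  · rcases Nat.eq_zero_or_pos t with rfl | htpos
    · simp
    · rw [Nat.descFactorial_eq_zero_iff_lt.mpr (by omega)]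
      simp
  obtain ⟨r, rfl⟩ : ∃ r, s = r + 1 := ⟨s - 1, by omega⟩
  simp only [Nat.add_sub_cancel]
  have key2 : (r + 1) * r.descFactorial t = (r + 1 - t) * (r+1).descFactorial t := by
    rw [← Nat.succ_descFactorial_succ, Nat.descFactorial_succ]
  have key3 : (m + 1 - t) * (r+1).descFactorial t
      = (r + 1 - t) * (r+1).descFactorial t + (m - r) * (r+1).descFactorial t := by
    rcases le_or_gt t (r+1) with h | h
    · have h4 : m + 1 - t = (r + 1 - t) + (m - r) := by omega
      rw [h4, Nat.add_mul]
    · rw [Nat.descFactorial_eq_zero_iff_lt.mpr h]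
      simp
  have K1 : ((m:ℝ)+1) * (m.descFactorial t : ℝ)
      = ((m+1-t : ℕ):ℝ) * (((m+1).descFactorial t : ℕ):ℝ) := by
    exact_mod_cast congrArg (Nat.cast : ℕ → ℝ) key
  have K2 : ((r:ℝ)+1) * (r.descFactorial t : ℝ)
      = ((r+1-t : ℕ):ℝ) * (((r+1).descFactorial t : ℕ):ℝ) := by
    exact_mod_cast congrArg (Nat.cast : ℕ → ℝ) key2
  have K3 : ((m+1-t:ℕ):ℝ) * (((r+1).descFactorial t:ℕ):ℝ)
      = ((r+1-t:ℕ):ℝ) * (((r+1).descFactorial t:ℕ):ℝ)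
        + ((m-r:ℕ):ℝ) * (((r+1).descFactorial t:ℕ):ℝ) := by
    exact_mod_cast congrArg (Nat.cast : ℕ → ℝ) key3
  have K4 : ((m:ℝ)+1) - ((r:ℝ)+1) = ((m-r:ℕ):ℝ) := by
    rw [Nat.cast_sub (by omega : r ≤ m)]; ring
  push_cast
  field_simp
  linear_combination ((r+1).descFactorial t : ℝ) * K1 - ((m+1).descFactorial t : ℝ) * K2
    + ((m+1).descFactorial t : ℝ) * K3
    - ((r+1).descFactorial t : ℝ) * ((m+1).descFactorial t : ℝ) * K4

lemma lam_zero (n s : ℕ) : lam n 0 s = 1 := by simp [lam]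

lemma lam_rec (n a s : ℕ) (hn : 1 ≤ n) (ha : a ≤ n - 1) (hs : s ≤ n) :
    lam n a s = (s:ℝ)/(n:ℝ) * lam (n-1) a (s-1) + (1 - (s:ℝ)/(n:ℝ)) * lam (n-1) a s := by
  rw [lam, lam, lam, Finset.mul_sum, Finset.mul_sum, ← Finset.sum_add_distrib]
  refine Finset.sum_congr rfl fun t htmem => ?_
  have ht : t ≤ n - 1 := le_trans (by exact Nat.lt_succ_iff.mp (mem_range.mp htmem)) ha
  rw [mul_div_assoc, tau_rec n s t hn ht hs]
  ring

lemma lam_succ (n a s : ℕ) (hn : 1 ≤ n) (ha : a + 1 ≤ n) (hs : s ≤ n) :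
    lam n (a+1) s = -((s:ℝ)/(n:ℝ)) * lam (n-1) a (s-1) + (1 - (s:ℝ)/(n:ℝ)) * lam (n-1) a s := by
  have aux : lam n (a+1) s = lam n a s - 2 * ((s:ℝ)/(n:ℝ)) * lam (n-1) a (s-1) := by
    have hA : ∀ i ∈ Finset.range (a+1),
        ((a+1).choose (i+1) : ℝ) * (-2:ℝ)^(i+1) * (s.descFactorial (i+1) : ℝ)
            / (n.descFactorial (i+1) : ℝ)
        = ((a.choose i : ℝ) * (-2:ℝ)^(i+1) * (s.descFactorial (i+1) : ℝ)
            / (n.descFactorial (i+1) : ℝ))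
          + ((a.choose (i+1) : ℝ) * (-2:ℝ)^(i+1) * (s.descFactorial (i+1) : ℝ)
            / (n.descFactorial (i+1) : ℝ)) := by
      intro i hi
      rw [Nat.choose_succ_succ]
      push_cast
      ring
    rw [lam, Finset.sum_range_succ' _ (a+1), Finset.sum_congr rfl hA, Finset.sum_add_distrib]
    have hB : (∑ i ∈ Finset.range (a+1),
          ((a.choose (i+1) : ℝ) * (-2:ℝ)^(i+1) * (s.descFactorial (i+1) : ℝ)
            / (n.descFactorial (i+1) : ℝ)))
        + ((a+1).choose 0 : ℝ) * (-2:ℝ)^0 * (s.descFactorial 0 : ℝ) / (n.descFactorial 0 : ℝ)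
        = lam n a s := by
      have h0 : ((a+1).choose 0 : ℝ) * (-2:ℝ)^0 * (s.descFactorial 0 : ℝ) / (n.descFactorial 0 : ℝ)
          = ((a.choose 0 : ℝ) * (-2:ℝ)^0 * (s.descFactorial 0 : ℝ) / (n.descFactorial 0 : ℝ)) := by
        norm_num
      rw [h0, ← Finset.sum_range_succ'
        (fun t => (a.choose t : ℝ) * (-2:ℝ)^t * (s.descFactorial t : ℝ)
          / (n.descFactorial t : ℝ)) (a+1),
        Finset.sum_range_succ, lam]
      simp [Nat.choose_succ_self]
    have hC : (∑ i ∈ Finset.range (a+1),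
          ((a.choose i : ℝ) * (-2:ℝ)^(i+1) * (s.descFactorial (i+1) : ℝ)
            / (n.descFactorial (i+1) : ℝ)))
        = -2 * ((s:ℝ)/(n:ℝ)) * lam (n-1) a (s-1) := by
      rw [lam, Finset.mul_sum]
      refine Finset.sum_congr rfl fun i hi => ?_
      rw [mul_div_assoc, tau_shift n s i hn
        (le_trans (Nat.lt_succ_iff.mp (mem_range.mp hi)) (by omega))]
      ring
    rw [hC]
    linarith [hB]
  rw [aux, lam_rec n a s hn (by omega) hs]
  ring

lemma avec_le (b : ℕ) (i : Fin (2^b)) : avec b i ≤ b := by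
  induction b with
  | zero => simp [avec]
  | succ b IH =>
    rw [avec]
    split
    · exact le_trans (IH _) (by omega)
    · exact Nat.add_le_add (IH _) le_rfl

lemma avec_eq (b : ℕ) (i : Fin (2^(b+1))) (p : Fin 2) (q : Fin (2^b))
    (h : (i:ℕ) = (q:ℕ) + 2^b * (p:ℕ)) : avec (b+1) i = avec b q + (p:ℕ) := by
  have hq := q.isLt
  fin_cases p
  · simp only [Fin.val_zero, Nat.mul_zero, Nat.add_zero] at h ⊢
    rw [avec, dif_pos (by omega : (i:ℕ) < 2^b)]
    congr 1
    exact Fin.ext h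
  · simp only [Fin.val_one, Nat.mul_one] at h ⊢
    rw [avec, dif_neg (by omega : ¬ (i:ℕ) < 2^b)]
    congr 2
    exact Fin.ext (show (i:ℕ) - 2^b = (q:ℕ) by omega)

lemma kron2_eq {k : ℕ} (A : Matrix (Fin 2) (Fin 2) ℝ) (B : Matrix (Fin k) (Fin k) ℝ) :
    kron2 A B = Matrix.reindex finProdFinEquiv finProdFinEquiv (A ⊗ₖ B) := rfl

lemma reindex_diag {m n : Type*} [DecidableEq m] [DecidableEq n] (e : m ≃ n) (d : m → ℝ) :
    Matrix.reindex e e (Matrix.diagonal d) = Matrix.diagonal (d ∘ e.symm) := by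
  ext i j
  simp only [Matrix.reindex_apply, Matrix.submatrix_apply, Matrix.diagonal_apply,
    Function.comp_apply, e.symm.injective.eq_iff]

lemma reindex_mul {m n : Type*} [Fintype m] [Fintype n] [DecidableEq m] [DecidableEq n]
    (e : m ≃ n) (M N : Matrix m m ℝ) :
    Matrix.reindex e e M * Matrix.reindex e e N = Matrix.reindex e e (M * N) := by
  simp only [Matrix.reindex_apply]
  exact Matrix.submatrix_mul_equiv M N _ e.symm _

lemma reindex_smul_add {m n : Type*} (e : m ≃ n) (c₁ c₂ : ℝ)
    (X Y : Matrix m m ℝ) :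
    Matrix.reindex e e (c₁ • X + c₂ • Y)
      = c₁ • Matrix.reindex e e X + c₂ • Matrix.reindex e e Y := by
  ext i j
  simp

lemma sqrt2_sq : (Real.sqrt 2)⁻¹ * (Real.sqrt 2)⁻¹ * 2 = 1 := by
  rw [← mul_inv, Real.mul_self_sqrt (by norm_num)]
  norm_num

lemma tM_orth : tMᵀ * tM = 1 := by
  ext i j
  fin_cases i <;> fin_cases j <;>
    simp [tM, Matrix.mul_apply, Fin.sum_univ_two, Matrix.one_apply, Matrix.transpose_apply,
      Matrix.vecHead, Matrix.vecTail] <;>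
    nlinarith [sqrt2_sq]

lemma tM_conj : tMᵀ * Matrix.diagonal (fun p : Fin 2 => (-1:ℝ)^(p:ℕ)) * tM = pM := by
  ext i j
  fin_cases i <;> fin_cases j <;>
    simp [tM, pM, Matrix.mul_apply, Fin.sum_univ_two, Matrix.diagonal, Matrix.transpose_apply,
      Matrix.vecHead, Matrix.vecTail] <;>
    nlinarith [sqrt2_sq]

end Aux

open Kronecker

/-- `P_{n,b,s} = (T^{⊗b})ᵀ · diag(λ_{n,a_1,s}, …, λ_{n,a_{2^b},s}) · T^{⊗b}`. -/
theorem Pmat_eq_conj_diagonal (n b s : ℕ) (hb : b ≤ n) (hs : s ≤ n) :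
    Pmat b n s
      = (Tpow b)ᵀ * Matrix.diagonal (fun i => lam n (avec b i) s) * Tpow b := by
  induction b generalizing n s with
  | zero =>
    have h1 : (fun i : Fin (2^0) => lam n (avec 0 i) s) = fun _ => (1:ℝ) := by
      funext i
      rw [avec, lam_zero]
    rw [Pmat, Tpow, h1, Matrix.diagonal_one]
    simp
  | succ b IH =>
    have hn : 1 ≤ n := by omega
    have hbm : b ≤ n - 1 := by omega
    have IH1 : Pmat b (n-1) (s-1)
        = (Tpow b)ᵀ * Matrix.diagonal (fun q => lam (n-1) (avec b q) (s-1)) * Tpow b :=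
      IH (n-1) (s-1) hbm (by omega)
    have IH2 : (1 - (s:ℝ)/(n:ℝ)) • ((1 : Matrix (Fin 2) (Fin 2) ℝ) ⊗ₖ Pmat b (n-1) s)
        = (1 - (s:ℝ)/(n:ℝ)) • ((1 : Matrix (Fin 2) (Fin 2) ℝ) ⊗ₖ
            ((Tpow b)ᵀ * Matrix.diagonal (fun q => lam (n-1) (avec b q) s) * Tpow b)) := by
      rcases eq_or_lt_of_le hs with hsn | hsn
      · have hz : (1 - (s:ℝ)/(n:ℝ)) = 0 := by
          rw [hsn]
          field_simp; simp
        rw [hz, zero_smul, zero_smul]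
      · rw [IH (n-1) s hbm (by omega)]
    have hde : (fun i : Fin (2 * 2^b) =>
          lam n (avec (b+1) (finCongr (two_mul_pow b) i)) s) ∘ (finProdFinEquiv : Fin 2 × Fin (2^b) ≃ Fin (2 * 2^b))
        = fun pq : Fin 2 × Fin (2^b) =>
            ((s:ℝ)/(n:ℝ)) * ((-1:ℝ)^((pq.1:ℕ)) * lam (n-1) (avec b pq.2) (s-1))
            + (1 - (s:ℝ)/(n:ℝ)) * (1 * lam (n-1) (avec b pq.2) s) := by
      funext pq
      obtain ⟨p, q⟩ := pq
      have hval : ((finCongr (two_mul_pow b) (finProdFinEquiv (p, q)) : Fin (2^(b+1))) : ℕ)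
          = (q:ℕ) + 2^b * (p:ℕ) := by
        simp
      have havec : avec (b+1) (finCongr (two_mul_pow b) (finProdFinEquiv (p, q)))
          = avec b q + (p:ℕ) := avec_eq b _ p q hval
      have ha : avec b q ≤ n - 1 := le_trans (avec_le b q) hbm
      simp only [Function.comp_apply, havec]
      fin_cases p
      · simp only [Fin.val_zero, pow_zero, Nat.add_zero]
        rw [lam_rec n (avec b q) s hn (by omega) hs]
        ring
      · simp only [Fin.val_one, pow_one]
        rw [lam_succ n (avec b q) s hn (by omega) hs]
        ring
    have hdiag : Matrix.diagonal ((fun i : Fin (2 * 2^b) =>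
          lam n (avec (b+1) (finCongr (two_mul_pow b) i)) s) ∘ (finProdFinEquiv : Fin 2 × Fin (2^b) ≃ Fin (2 * 2^b)))
        = ((s:ℝ)/(n:ℝ)) • (Matrix.diagonal (fun p : Fin 2 => (-1:ℝ)^(p:ℕ))
              ⊗ₖ Matrix.diagonal (fun q => lam (n-1) (avec b q) (s-1)))
          + (1 - (s:ℝ)/(n:ℝ)) • ((1 : Matrix (Fin 2) (Fin 2) ℝ)
              ⊗ₖ Matrix.diagonal (fun q => lam (n-1) (avec b q) s)) := by
      rw [show (1 : Matrix (Fin 2) (Fin 2) ℝ) = Matrix.diagonal (fun _ => (1:ℝ)) from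
        (Matrix.diagonal_one).symm]
      rw [Matrix.diagonal_kronecker_diagonal, Matrix.diagonal_kronecker_diagonal,
        ← Matrix.diagonal_smul, ← Matrix.diagonal_smul, Matrix.diagonal_add, hde]
      exact congrArg Matrix.diagonal (by funext pq; simp)
    have main : ((s:ℝ)/(n:ℝ)) • (pM ⊗ₖ Pmat b (n-1) (s-1))
          + (1 - (s:ℝ)/(n:ℝ)) • ((1 : Matrix (Fin 2) (Fin 2) ℝ) ⊗ₖ Pmat b (n-1) s)
        = (tM ⊗ₖ Tpow b)ᵀ * Matrix.diagonal ((fun i : Fin (2 * 2^b) =>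
              lam n (avec (b+1) (finCongr (two_mul_pow b) i)) s)
              ∘ (finProdFinEquiv : Fin 2 × Fin (2^b) ≃ Fin (2 * 2^b)))
          * (tM ⊗ₖ Tpow b) := by
      rw [hdiag, Matrix.mul_add, Matrix.add_mul, Matrix.mul_smul, Matrix.smul_mul,
        Matrix.mul_smul, Matrix.smul_mul, ← Matrix.kroneckerMap_transpose,
        ← Matrix.mul_kronecker_mul, ← Matrix.mul_kronecker_mul,
        ← Matrix.mul_kronecker_mul, ← Matrix.mul_kronecker_mul,
        Matrix.mul_one, tM_conj, tM_orth, IH1, IH2]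
    have main2 : ((s:ℝ)/(n:ℝ)) • kron2 pM (Pmat b (n-1) (s-1))
          + (1 - (s:ℝ)/(n:ℝ)) • kron2 (1 : Matrix (Fin 2) (Fin 2) ℝ) (Pmat b (n-1) s)
        = (kron2 tM (Tpow b))ᵀ * Matrix.diagonal (fun i : Fin (2 * 2^b) =>
              lam n (avec (b+1) (finCongr (two_mul_pow b) i)) s)
          * kron2 tM (Tpow b) := by
      have hdd : Matrix.diagonal (fun i : Fin (2 * 2^b) =>
            lam n (avec (b+1) (finCongr (two_mul_pow b) i)) s)
          = Matrix.reindex (finProdFinEquiv : Fin 2 × Fin (2^b) ≃ Fin (2 * 2^b)) finProdFinEquiv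
              (Matrix.diagonal ((fun i : Fin (2 * 2^b) =>
                lam n (avec (b+1) (finCongr (two_mul_pow b) i)) s) ∘ finProdFinEquiv)) := by
        rw [reindex_diag]
        exact congrArg Matrix.diagonal
          (by funext i; simp only [Function.comp_apply, Equiv.apply_symm_apply])
      rw [kron2_eq, kron2_eq, kron2_eq, hdd, Matrix.transpose_reindex,
        reindex_mul, reindex_mul, ← main, ← reindex_smul_add]
    have hTp : Tpow (b+1) = Matrix.reindex (finCongr (two_mul_pow b)) (finCongr (two_mul_pow b))
        (kron2 tM (Tpow b)) := rfl
    have hdf : Matrix.diagonal (fun i : Fin (2^(b+1)) => lam n (avec (b+1) i) s)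
        = Matrix.reindex (finCongr (two_mul_pow b)) (finCongr (two_mul_pow b))
            (Matrix.diagonal (fun i : Fin (2 * 2^b) =>
              lam n (avec (b+1) (finCongr (two_mul_pow b) i)) s)) := by
      rw [reindex_diag]
      exact congrArg Matrix.diagonal
        (by funext i; simp only [Function.comp_apply, Equiv.apply_symm_apply])
    rw [Pmat, main2, hTp, hdf, Matrix.transpose_reindex, reindex_mul, reindex_mul]
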